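/- Let u be a C^1 function on the cylinder C = [0,1] × T, T = R/2πZ, and let κ : T → R be continuous with 0 < h < h₀ < 1/‖κ‖_∞. Define the weighted norms ‖u‖²_{Λ⁰L²_m} = ∫₀¹∫₀^{2π} h(1+hηκ(θ))|u|² dθ dη and ‖du‖²_{Λ¹L²_m} = ∫₀¹∫₀^{2π} ( (1+hηκ)/h |∂_η u|² + h/(1+hηκ) |∂_θ u|² ) dθ dη. Then there exists a constant C > 0 independent of h and u such that ‖u‖²_{Λ⁰L²_m} ≤ C ( ‖du‖²_{Λ¹L²_m} + ∫₀^{2π} |u(0,θ)|² dθ ). -/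

import Mathlib

open Real MeasureTheory intervalIntegral

lemma myCS (g : ℝ → ℝ) (hg : Continuous g) {η : ℝ} (hη : 0 ≤ η) :
    (∫ s in (0:ℝ)..η, g s) ^ 2 ≤ η * ∫ s in (0:ℝ)..η, (g s) ^ 2 := by
  rcases hη.eq_or_lt with rfl | hpos
  · simp
  · set B := ∫ s in (0:ℝ)..η, (g s) ^ 2 with hB
    set A := ∫ s in (0:ℝ)..η, g s with hA
    set t := A / η with ht
    have h1 : 0 ≤ ∫ s in (0:ℝ)..η, (g s - t) ^ 2 :=
      intervalIntegral.integral_nonneg hpos.le fun s _ => sq_nonneg _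
    have h2 : ∫ s in (0:ℝ)..η, (g s - t) ^ 2 = B - 2 * t * A + t ^ 2 * η := by
      have e : ∀ s, (g s - t) ^ 2 = (g s) ^ 2 - 2 * t * g s + t ^ 2 := fun s => by ring
      simp only [e]
      rw [intervalIntegral.integral_add (f := fun s => g s ^ 2 - 2 * t * g s) (g := fun _ => t ^ 2) (((hg.pow 2).sub
            (continuous_const.mul hg)).intervalIntegrable 0 η)
          (continuous_const.intervalIntegrable 0 η),
        intervalIntegral.integral_sub (f := fun s => g s ^ 2) (g := fun s => 2 * t * g s) ((hg.pow 2).intervalIntegrable 0 η)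
          ((continuous_const.mul hg).intervalIntegrable 0 η),
        intervalIntegral.integral_const, intervalIntegral.integral_const_mul]
      simp only [smul_eq_mul, sub_zero]
      ring
    rw [h2] at h1
    have h4 : 0 ≤ η * (B - 2 * t * A + t ^ 2 * η) := mul_nonneg hpos.le h1
    have h5 : η * (B - 2 * t * A + t ^ 2 * η) = η * B - A ^ 2 := by
      rw [ht]; field_simp; ring
    rw [h5] at h4
    linarith

lemma mySwap (f : ℝ → ℝ → ℝ) (hf : Continuous (Function.uncurry f)) {a b : ℝ}
    (ha : 0 ≤ a) (hb : 0 ≤ b) :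
    (∫ x in (0:ℝ)..a, ∫ y in (0:ℝ)..b, f x y) = ∫ y in (0:ℝ)..b, ∫ x in (0:ℝ)..a, f x y := by
  have hint : Integrable (Function.uncurry f)
      ((volume.restrict (Set.Ioc (0:ℝ) a)).prod (volume.restrict (Set.Ioc (0:ℝ) b))) := by
    rw [Measure.prod_restrict]
    exact (hf.continuousOn.integrableOn_compact
      (isCompact_Icc.prod isCompact_Icc)).mono_set
      (Set.prod_mono Set.Ioc_subset_Icc_self Set.Ioc_subset_Icc_self)
  simp_rw [intervalIntegral.integral_of_le ha, intervalIntegral.integral_of_le hb]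
  exact MeasureTheory.integral_integral_swap hint

set_option maxHeartbeats 1000000

/-- weighted Poincaré-type inequality on the cylinder, uniform in the membrane
thickness `h ∈ (0,h₀)` with `h₀‖κ‖_∞ < 1`: the weighted (membrane) `L²` norm of `u` is
controlled by the weighted norm of its differential and the trace at `η = 0`. -/
theorem stmt3 (κ : ℝ → ℝ) (hκ : Continuous κ) (hκper : ∀ θ, κ (θ + 2 * π) = κ θ)
    (M h₀ : ℝ) (hM : ∀ θ, |κ θ| ≤ M) (hh₀ : 0 < h₀) (hsmall : h₀ * M < 1) :
    ∃ C > (0:ℝ), ∀ h : ℝ, 0 < h → h < h₀ → ∀ u : ℝ → ℝ → ℂ,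
      ContDiff ℝ 1 (fun p : ℝ × ℝ => u p.1 p.2) →
      (∀ η θ, u η (θ + 2 * π) = u η θ) →
      (∫ η in (0:ℝ)..1, ∫ θ in (0:ℝ)..(2*π), h * (1 + h * η * κ θ) * ‖u η θ‖ ^ 2)
        ≤ C * ((∫ η in (0:ℝ)..1, ∫ θ in (0:ℝ)..(2*π),
                ((1 + h * η * κ θ) / h * ‖deriv (fun s => u s θ) η‖ ^ 2
                  + h / (1 + h * η * κ θ) * ‖deriv (u η) θ‖ ^ 2))
              + ∫ θ in (0:ℝ)..(2*π), ‖u 0 θ‖ ^ 2) := by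
  have hM0 : 0 ≤ M := (abs_nonneg _).trans (hM 0)
  have hden : 0 < 1 - h₀ * M := by linarith
  set c : ℝ := (1 - h₀ * M) / h₀ with hc
  have hcpos : 0 < c := div_pos hden hh₀
  clear_value c
  refine ⟨4 * h₀ * h₀ / (1 - h₀ * M) + 4 * h₀ + 1, by positivity, ?_⟩
  intro h hh hh0 u hu _huper
  set U : ℝ × ℝ → ℂ := fun p => u p.1 p.2 with hUdef
  set Dη : ℝ → ℝ → ℂ := fun η θ => fderiv ℝ U (η, θ) (1, 0) with hDηdef
  set Dθ : ℝ → ℝ → ℂ := fun η θ => fderiv ℝ U (η, θ) (0, 1) with hDθdef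
  have hUc : Continuous U := hu.continuous
  have hfc : Continuous (fun p : ℝ × ℝ => fderiv ℝ U p) := hu.continuous_fderiv one_ne_zero
  have hDηc : Continuous (fun p : ℝ × ℝ => Dη p.1 p.2) := hfc.clm_apply continuous_const
  have hDθc : Continuous (fun p : ℝ × ℝ => Dθ p.1 p.2) := hfc.clm_apply continuous_const
  have hasDη : ∀ η θ : ℝ, HasDerivAt (fun s => u s θ) (Dη η θ) η := fun η θ =>
    (((hu.differentiable one_ne_zero (η, θ)).hasFDerivAt).comp_hasDerivAt η
      (HasDerivAt.prodMk (hasDerivAt_id' η) (hasDerivAt_const η θ)) :)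
  have hasDθ : ∀ η θ : ℝ, HasDerivAt (u η) (Dθ η θ) θ := fun η θ =>
    (((hu.differentiable one_ne_zero (η, θ)).hasFDerivAt).comp_hasDerivAt θ
      (HasDerivAt.prodMk (hasDerivAt_const θ η) (hasDerivAt_id' θ)) :)
  have hd1 : ∀ θ η : ℝ, deriv (fun s => u s θ) η = Dη η θ := fun θ η => (hasDη η θ).deriv
  have hd2 : ∀ η θ : ℝ, deriv (u η) θ = Dθ η θ := fun η θ => (hasDθ η θ).deriv
  have hπ : (0:ℝ) ≤ 2 * π := by positivity
  -- continuity of slices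
  have hDηsl : ∀ θ : ℝ, Continuous fun s => Dη s θ := fun θ =>
    hDηc.comp (continuous_id.prodMk continuous_const)
  -- weight bounds
  have hwb : ∀ η ∈ Set.Icc (0:ℝ) 1, ∀ θ : ℝ,
      1 - h₀ * M ≤ 1 + h * η * κ θ ∧ 1 + h * η * κ θ ≤ 2 := by
    intro η hη θ
    obtain ⟨hk1, hk2⟩ := abs_le.1 (hM θ)
    have h1 : h * η ≤ h₀ := by nlinarith [hη.1, hη.2]
    have h2 : 0 ≤ h * η := mul_nonneg hh.le hη.1
    constructor <;> nlinarith [mul_le_mul_of_nonneg_left hk2 h2,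
      mul_le_mul_of_nonneg_left hk1 h2, mul_le_mul_of_nonneg_right h1 hM0]
  -- pointwise FTC + Cauchy-Schwarz bound
  have hpt : ∀ η ∈ Set.Icc (0:ℝ) 1, ∀ θ : ℝ,
      ‖u η θ‖ ^ 2 ≤ 2 * ‖u 0 θ‖ ^ 2 + 2 * ∫ s in (0:ℝ)..1, ‖Dη s θ‖ ^ 2 := by
    intro η hη θ
    have hftc : (∫ s in (0:ℝ)..η, Dη s θ) = u η θ - u 0 θ :=
      intervalIntegral.integral_eq_sub_of_hasDerivAt (fun s _ => hasDη s θ)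
        ((hDηsl θ).intervalIntegrable 0 η)
    have h1 : ‖u η θ‖ ≤ ‖u 0 θ‖ + ‖∫ s in (0:ℝ)..η, Dη s θ‖ := by
      rw [hftc]
      calc ‖u η θ‖ = ‖u 0 θ + (u η θ - u 0 θ)‖ := by ring_nf
        _ ≤ _ := norm_add_le _ _
    have h2 : ‖∫ s in (0:ℝ)..η, Dη s θ‖ ≤ ∫ s in (0:ℝ)..η, ‖Dη s θ‖ :=
      intervalIntegral.norm_integral_le_integral_norm hη.1
    have h3 : (∫ s in (0:ℝ)..η, ‖Dη s θ‖) ^ 2 ≤ η * ∫ s in (0:ℝ)..η, ‖Dη s θ‖ ^ 2 :=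
      myCS _ (hDηsl θ).norm hη.1
    have h4 : (∫ s in (0:ℝ)..η, ‖Dη s θ‖ ^ 2) ≤ ∫ s in (0:ℝ)..1, ‖Dη s θ‖ ^ 2 :=
      intervalIntegral.integral_mono_interval le_rfl hη.1 hη.2
        (Filter.Eventually.of_forall fun s => sq_nonneg _)
        (((hDηsl θ).norm.pow 2).intervalIntegrable 0 1)
    have h5 : 0 ≤ ∫ s in (0:ℝ)..η, ‖Dη s θ‖ ^ 2 :=
      intervalIntegral.integral_nonneg hη.1 fun s _ => sq_nonneg _
    have h6 : 0 ≤ ∫ s in (0:ℝ)..η, ‖Dη s θ‖ :=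
      intervalIntegral.integral_nonneg hη.1 fun s _ => norm_nonneg _
    nlinarith [norm_nonneg (u η θ), norm_nonneg (u 0 θ), norm_nonneg (∫ s in (0:ℝ)..η, Dη s θ),
      hη.1, hη.2, sq_nonneg (‖u 0 θ‖ - ‖∫ s in (0:ℝ)..η, Dη s θ‖)]

  -- continuity of θ-slices of u
  have hu0c : Continuous fun θ => u 0 θ := hUc.comp (continuous_const.prodMk continuous_id)
  set Iℓ : ℝ → ℝ := fun θ => ∫ s in (0:ℝ)..1, ‖Dη s θ‖ ^ 2 with hIdef
  have hIc : Continuous Iℓ :=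
    intervalIntegral.continuous_parametric_intervalIntegral_of_continuous'
      (f := fun θ s => ‖Dη s θ‖ ^ 2) (by exact (hDηc.comp continuous_swap).norm.pow 2) 0 1
  have hI0 : ∀ θ, 0 ≤ Iℓ θ := fun θ =>
    intervalIntegral.integral_nonneg zero_le_one fun s _ => sq_nonneg _
  set T : ℝ := ∫ θ in (0:ℝ)..(2*π), ‖u 0 θ‖ ^ 2 with hTdef
  set S' : ℝ := ∫ θ in (0:ℝ)..(2*π), Iℓ θ with hS'def
  set S : ℝ := ∫ η in (0:ℝ)..1, ∫ θ in (0:ℝ)..(2*π), ‖Dη η θ‖ ^ 2 with hSdef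
  have hswap : S' = S :=
    mySwap (fun θ s => ‖Dη s θ‖ ^ 2) (by exact (hDηc.comp continuous_swap).norm.pow 2) hπ zero_le_one
  have hT0 : 0 ≤ T := intervalIntegral.integral_nonneg hπ fun θ _ => sq_nonneg _
  have hS0 : 0 ≤ S := intervalIntegral.integral_nonneg zero_le_one fun η _ =>
    intervalIntegral.integral_nonneg hπ fun θ _ => sq_nonneg _
  -- Step 1 : LHS ≤ 4h₀ S' + 4h₀ T
  have hLHS : (∫ η in (0:ℝ)..1, ∫ θ in (0:ℝ)..(2*π), h * (1 + h * η * κ θ) * ‖u η θ‖ ^ 2)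
      ≤ 4 * h₀ * S' + 4 * h₀ * T := by
    have hbnd : ∀ η ∈ Set.Icc (0:ℝ) 1,
        (∫ θ in (0:ℝ)..(2*π), h * (1 + h * η * κ θ) * ‖u η θ‖ ^ 2)
          ≤ 4 * h₀ * S' + 4 * h₀ * T := by
      intro η hη
      have huηc : Continuous fun θ => u η θ := hUc.comp (continuous_const.prodMk continuous_id)
      have intL : IntervalIntegrable (fun θ => h * (1 + h * η * κ θ) * ‖u η θ‖ ^ 2)
          volume 0 (2*π) :=
        ((continuous_const.mul (continuous_const.add
          (continuous_const.mul hκ))).mul (huηc.norm.pow 2)).intervalIntegrable 0 (2*π)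
      have intR : IntervalIntegrable (fun θ => 4 * h₀ * Iℓ θ + 4 * h₀ * ‖u 0 θ‖ ^ 2)
          volume 0 (2*π) :=
        ((continuous_const.mul hIc).add
          (continuous_const.mul (hu0c.norm.pow 2))).intervalIntegrable 0 (2*π)
      have hmono : (∫ θ in (0:ℝ)..(2*π), h * (1 + h * η * κ θ) * ‖u η θ‖ ^ 2)
          ≤ ∫ θ in (0:ℝ)..(2*π), (4 * h₀ * Iℓ θ + 4 * h₀ * ‖u 0 θ‖ ^ 2) := by
        refine intervalIntegral.integral_mono_on hπ intL intR fun θ _ => ?_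
        obtain ⟨hlb, hub⟩ := hwb η hη θ
        have hw1 : 0 ≤ h * (1 + h * η * κ θ) := mul_nonneg hh.le (by linarith)
        have hw2 : h * (1 + h * η * κ θ) ≤ 2 * h₀ := by nlinarith
        calc h * (1 + h * η * κ θ) * ‖u η θ‖ ^ 2
            ≤ 2 * h₀ * ‖u η θ‖ ^ 2 := mul_le_mul_of_nonneg_right hw2 (sq_nonneg _)
          _ ≤ 2 * h₀ * (2 * ‖u 0 θ‖ ^ 2 + 2 * Iℓ θ) :=
              mul_le_mul_of_nonneg_left (hpt η hη θ) (by positivity)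
          _ = 4 * h₀ * Iℓ θ + 4 * h₀ * ‖u 0 θ‖ ^ 2 := by ring
      have heq : (∫ θ in (0:ℝ)..(2*π), (4 * h₀ * Iℓ θ + 4 * h₀ * ‖u 0 θ‖ ^ 2))
          = 4 * h₀ * S' + 4 * h₀ * T := by
        rw [intervalIntegral.integral_add (f := fun θ => 4 * h₀ * Iℓ θ) (g := fun θ => 4 * h₀ * ‖u 0 θ‖ ^ 2) ((continuous_const.mul hIc).intervalIntegrable 0 (2*π))
            ((continuous_const.mul (hu0c.norm.pow 2)).intervalIntegrable 0 (2*π)),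
          intervalIntegral.integral_const_mul, intervalIntegral.integral_const_mul]
      rw [heq] at hmono
      exact hmono
    have hOuterCont : Continuous fun η => ∫ θ in (0:ℝ)..(2*π),
        h * (1 + h * η * κ θ) * ‖u η θ‖ ^ 2 :=
      intervalIntegral.continuous_parametric_intervalIntegral_of_continuous'
        (f := fun η θ => h * (1 + h * η * κ θ) * ‖u η θ‖ ^ 2)
        (by exact ((continuous_const.mul (continuous_const.add
          ((continuous_const.mul continuous_fst).mul (hκ.comp continuous_snd)))).mul
          (hUc.norm.pow 2))) 0 (2*π)
    calc (∫ η in (0:ℝ)..1, ∫ θ in (0:ℝ)..(2*π), h * (1 + h * η * κ θ) * ‖u η θ‖ ^ 2)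
        ≤ ∫ _η in (0:ℝ)..1, (4 * h₀ * S' + 4 * h₀ * T) :=
          intervalIntegral.integral_mono_on zero_le_one
            (hOuterCont.intervalIntegrable 0 1) (intervalIntegrable_const) hbnd
      _ = 4 * h₀ * S' + 4 * h₀ * T := by simp
  -- Step 3 : lower bound for the gradient term, with clamped weight
  set cl : ℝ → ℝ := fun η => max 0 (min η 1) with hcldef
  have hclc : Continuous cl := continuous_const.max (continuous_id.min continuous_const)
  have hclmem : ∀ η, cl η ∈ Set.Icc (0:ℝ) 1 :=
    fun η => ⟨le_max_left 0 _, max_le zero_le_one (min_le_right η 1)⟩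
  have hcleq : ∀ η ∈ Set.Icc (0:ℝ) 1, cl η = η := fun η hη => by
    simp only [hcldef]; rw [min_eq_left hη.2, max_eq_right hη.1]
  have hdenc : Continuous fun p : ℝ × ℝ => 1 + h * cl p.1 * κ p.2 :=
    continuous_const.add (((continuous_const.mul (hclc.comp continuous_fst))).mul
      (hκ.comp continuous_snd))
  have hdenlb : ∀ η θ : ℝ, 1 - h₀ * M ≤ 1 + h * cl η * κ θ :=
    fun η θ => (hwb (cl η) (hclmem η) θ).1
  have hden0 : ∀ p : ℝ × ℝ, 1 + h * cl p.1 * κ p.2 ≠ 0 :=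
    fun p => ne_of_gt (lt_of_lt_of_le hden (hdenlb p.1 p.2))
  have hGrw : (∫ η in (0:ℝ)..1, ∫ θ in (0:ℝ)..(2*π),
        ((1 + h * η * κ θ) / h * ‖deriv (fun s => u s θ) η‖ ^ 2
          + h / (1 + h * η * κ θ) * ‖deriv (u η) θ‖ ^ 2))
      = ∫ η in (0:ℝ)..1, ∫ θ in (0:ℝ)..(2*π),
        ((1 + h * cl η * κ θ) / h * ‖Dη η θ‖ ^ 2
          + h / (1 + h * cl η * κ θ) * ‖Dθ η θ‖ ^ 2) := by
    refine intervalIntegral.integral_congr fun η hη => ?_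
    rw [Set.uIcc_of_le zero_le_one] at hη
    simp only [hd1, hd2, hcleq η hη]
  set G' : ℝ := ∫ η in (0:ℝ)..1, ∫ θ in (0:ℝ)..(2*π),
      ((1 + h * cl η * κ θ) / h * ‖Dη η θ‖ ^ 2
        + h / (1 + h * cl η * κ θ) * ‖Dθ η θ‖ ^ 2) with hG'def
  have hG'lb : c * S ≤ G' := by
    have e1 : c * S = ∫ η in (0:ℝ)..1, ∫ θ in (0:ℝ)..(2*π), c * ‖Dη η θ‖ ^ 2 := by
      rw [hSdef]
      simp_rw [intervalIntegral.integral_const_mul]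
    rw [e1, hG'def]
    have hcontL : Continuous fun η => ∫ θ in (0:ℝ)..(2*π), c * ‖Dη η θ‖ ^ 2 :=
      intervalIntegral.continuous_parametric_intervalIntegral_of_continuous'
        (f := fun η θ => c * ‖Dη η θ‖ ^ 2) (by exact continuous_const.mul (hDηc.norm.pow 2)) 0 (2*π)
    have hGintc : Continuous fun p : ℝ × ℝ =>
        (1 + h * cl p.1 * κ p.2) / h * ‖Dη p.1 p.2‖ ^ 2
          + h / (1 + h * cl p.1 * κ p.2) * ‖Dθ p.1 p.2‖ ^ 2 :=
      ((hdenc.div_const h).mul (hDηc.norm.pow 2)).add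
        ((continuous_const.div hdenc hden0).mul (hDθc.norm.pow 2))
    have hcontR : Continuous fun η => ∫ θ in (0:ℝ)..(2*π),
        ((1 + h * cl η * κ θ) / h * ‖Dη η θ‖ ^ 2
          + h / (1 + h * cl η * κ θ) * ‖Dθ η θ‖ ^ 2) :=
      intervalIntegral.continuous_parametric_intervalIntegral_of_continuous'
        (f := fun η θ => (1 + h * cl η * κ θ) / h * ‖Dη η θ‖ ^ 2
          + h / (1 + h * cl η * κ θ) * ‖Dθ η θ‖ ^ 2) hGintc 0 (2*π)
    refine intervalIntegral.integral_mono_on zero_le_one (hcontL.intervalIntegrable 0 1)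
      (hcontR.intervalIntegrable 0 1) fun η _ => ?_
    have hθc1 : Continuous fun θ => c * ‖Dη η θ‖ ^ 2 :=
      continuous_const.mul (((hDηc.comp (continuous_const.prodMk continuous_id)).norm).pow 2)
    have hθc2 : Continuous fun θ => (1 + h * cl η * κ θ) / h * ‖Dη η θ‖ ^ 2
        + h / (1 + h * cl η * κ θ) * ‖Dθ η θ‖ ^ 2 :=
      hGintc.comp (continuous_const.prodMk continuous_id)
    refine intervalIntegral.integral_mono_on hπ (hθc1.intervalIntegrable 0 (2*π))
      (hθc2.intervalIntegrable 0 (2*π)) fun θ _ => ?_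
    have hlb := hdenlb η θ
    have hcge : c ≤ (1 + h * cl η * κ θ) / h := by
      rw [hc, div_le_div_iff₀ hh₀ hh]
      nlinarith
    have h2nn : 0 ≤ h / (1 + h * cl η * κ θ) * ‖Dθ η θ‖ ^ 2 :=
      mul_nonneg (div_nonneg hh.le (by linarith)) (sq_nonneg _)
    nlinarith [mul_le_mul_of_nonneg_right hcge (sq_nonneg ‖Dη η θ‖)]
  have hG'0 : 0 ≤ G' := le_trans (mul_nonneg hcpos.le hS0) hG'lb
  -- combine
  rw [hGrw]
  rw [hswap] at hLHS
  clear_value S T G'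
  have hk : 4 * h₀ = (4 * h₀ * h₀ / (1 - h₀ * M)) * c := by
    rw [hc]; field_simp
  have hkpos : 0 < 4 * h₀ * h₀ / (1 - h₀ * M) := by positivity
  have h4S : 4 * h₀ * S ≤ (4 * h₀ * h₀ / (1 - h₀ * M)) * G' := by
    calc 4 * h₀ * S = (4 * h₀ * h₀ / (1 - h₀ * M)) * (c * S) := by
          rw [hc]; field_simp
      _ ≤ _ := mul_le_mul_of_nonneg_left hG'lb hkpos.le
  nlinarith [mul_nonneg hkpos.le hT0, mul_nonneg (by positivity : (0:ℝ) ≤ 4 * h₀ + 1) hG'0,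
    mul_nonneg hkpos.le hG'0]
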